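/- Let R be a strongly J-*-clean ring. Then for any a ∈ R, a + a* ∈ J(R). -/

import Mathlib

/-- A *-ring `R` is strongly J-*-clean if every element is the sum of a projection
and an element of the Jacobson radical that commute. -/
def StronglyJStarClean (R : Type*) [Ring R] [StarRing R] : Prop :=
  ∀ a : R, ∃ e u : R, e * e = e ∧ star e = e ∧
    u ∈ Ideal.jacobson (⊥ : Ideal R) ∧ a = e + u ∧ a * e = e * a

section Aux

variable {R : Type*} [Ring R]

/-- `jacobson ⊥` is closed under right multiplication. -/
lemma jac_mul_mem_right {x : R} (hx : x ∈ Ideal.jacobson (⊥ : Ideal R)) (y : R) :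
    x * y ∈ Ideal.jacobson (⊥ : Ideal R) := by
  exact Ideal.mul_mem_right y _ hx

/-- Elements of the Jacobson radical have left-invertible `u + 1`. -/
lemma left_inv_of_mem_jac {u : R} (hu : u ∈ Ideal.jacobson (⊥ : Ideal R)) :
    ∃ z : R, z * (u + 1) = 1 := by
  obtain ⟨z, hz⟩ := Ideal.mem_jacobson_iff.1 hu 1
  rw [Ideal.mem_bot, mul_one, sub_eq_zero] at hz
  exact ⟨z, by rw [mul_add, mul_one, hz]⟩

/-- If `u` is in the Jacobson radical then `u + 1` is a unit. -/
lemma isUnit_add_one_of_mem_jac {u : R} (hu : u ∈ Ideal.jacobson (⊥ : Ideal R)) :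
    IsUnit (u + 1) := by
  obtain ⟨z, hz1⟩ := left_inv_of_mem_jac hu
  -- z = 1 - z*u, and -(z*u) ∈ J, so z also has a left inverse
  have hzu : -(z * u) ∈ Ideal.jacobson (⊥ : Ideal R) :=
    neg_mem (Ideal.mul_mem_left _ z hu)
  obtain ⟨w, hw⟩ := left_inv_of_mem_jac hzu
  have hz1' : z * u + z = 1 := by rw [← hz1, mul_add, mul_one]
  have hz' : -(z * u) + 1 = z := by
    rw [neg_add_eq_sub, sub_eq_iff_eq_add, ← hz1']; abel
  rw [hz'] at hw
  have hw_eq : w = u + 1 := by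
    calc w = w * (z * (u + 1)) := by rw [hz1, mul_one]
    _ = (w * z) * (u + 1) := by rw [mul_assoc]
    _ = u + 1 := by rw [hw, one_mul]
  rw [hw_eq] at hw
  exact ⟨⟨u + 1, z, hw, hz1⟩, rfl⟩

/-- The Jacobson radical of a *-ring is star-closed. -/
lemma star_mem_jac [StarRing R] {u : R} (hu : u ∈ Ideal.jacobson (⊥ : Ideal R)) :
    star u ∈ Ideal.jacobson (⊥ : Ideal R) := by
  rw [Ideal.mem_jacobson_iff]
  intro y
  have h1 : u * star y ∈ Ideal.jacobson (⊥ : Ideal R) := jac_mul_mem_right hu _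
  have h2 : IsUnit (u * star y + 1) := isUnit_add_one_of_mem_jac h1
  have h3 : IsUnit (y * star u + 1) := by
    have := h2.star
    simpa using this
  obtain ⟨v, hv⟩ := h3.exists_left_inv
  refine ⟨v, ?_⟩
  rw [Ideal.mem_bot, sub_eq_zero, mul_assoc, ← hv, mul_add, mul_one]

end Aux

theorem stmt_8 (R : Type*) [Ring R] [StarRing R] (h : StronglyJStarClean R) :
    ∀ a : R, a + star a ∈ Ideal.jacobson (⊥ : Ideal R) := by
  -- First: 2 ∈ J, from decomposing -1
  have h2 : (2 : R) ∈ Ideal.jacobson (⊥ : Ideal R) := by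
    obtain ⟨f, v, hf2, _, hv, hfv, _⟩ := h (-1)
    have hfu : IsUnit f := by
      have hfe : f = -(v + 1) := by
        have : f = -1 - v := eq_sub_of_add_eq hfv.symm
        rw [this]; abel
      rw [hfe]
      exact (isUnit_add_one_of_mem_jac hv).neg
    have hf1 : f = 1 := by
      obtain ⟨w, hw⟩ := hfu.exists_left_inv
      calc f = (w * f) * f := by rw [hw, one_mul]
      _ = w * (f * f) := by rw [mul_assoc]
      _ = w * f := by rw [hf2]
      _ = 1 := hw
    have hv2 : v = -2 := by
      rw [hf1] at hfv
      have : v = -1 - 1 := eq_sub_of_add_eq' hfv.symm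
      rw [this]; norm_num
    rw [hv2] at hv
    simpa using neg_mem hv
  intro a
  obtain ⟨e, u, he2, hes, hu, hau, _⟩ := h a
  have key : a + star a = 2 * e + (u + star u) := by
    rw [hau, star_add, hes, two_mul]
    abel
  rw [key]
  exact add_mem (jac_mul_mem_right h2 e) (add_mem hu (star_mem_jac hu))
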